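/- arXiv:1508.01348 — 2 statements merged into one kernel-verified Lean document; each statement's English description precedes it below -/
import Mathlib

section
/- Let n ≥ 3 with n ≠ 4. Let K be a field with algebraic closure K̄, and let L₁,…,L_r be intermediate fields of K̄/K, each finite-dimensional and Galois over K, such that each Galois group Gal(Lᵢ/K) is isomorphic to a normal subgroup of the symmetric group Sₙ. Let L be the compositum of L₁,…,L_r. Then there is no surjective group homomorphism from Gal(L/K) onto the Weyl group W(Bₙ) = V ⋊ Sₙ, and no surjective group homomorphism from Gal(L/K) onto the Weyl group W(Dₙ) = Vₑ ⋊ Sₙ. -/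
open Multiplicative

abbrev Vn (n : ℕ) := Multiplicative (Fin n → ZMod 2)

def permAut (n : ℕ) : Equiv.Perm (Fin n) →* MulAut (Vn n) where
  toFun σ :=
    { toFun := fun v => ofAdd fun i => toAdd v (σ⁻¹ i)
      invFun := fun v => ofAdd fun i => toAdd v (σ i)
      left_inv := fun v => by simp
      right_inv := fun v => by simp
      map_mul' := fun v w => rfl }
  map_one' := rfl
  map_mul' := fun σ τ => rfl

@[simp] lemma permAut_apply (n : ℕ) (σ : Equiv.Perm (Fin n)) (v : Vn n) (i : Fin n) :
    toAdd (permAut n σ v) i = toAdd v (σ⁻¹ i) := rfl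

def Ve (n : ℕ) : Subgroup (Vn n) where
  carrier := {v | ∑ i, toAdd v i = 0}
  one_mem' := by simp
  mul_mem' := by
    intro a b ha hb
    simp only [Set.mem_setOf_eq, toAdd_mul, Pi.add_apply, Finset.sum_add_distrib] at *
    rw [ha, hb, add_zero]
  inv_mem' := by
    intro a ha
    simp only [Set.mem_setOf_eq, toAdd_inv, Pi.neg_apply, Finset.sum_neg_distrib] at *
    rw [ha, neg_zero]

lemma permAut_mem_Ve {n : ℕ} (σ : Equiv.Perm (Fin n)) {v : Vn n} (hv : v ∈ Ve n) :
    permAut n σ v ∈ Ve n := by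
  have h : ∑ i, toAdd v (σ⁻¹ i) = ∑ i, toAdd v i := Equiv.sum_comp σ⁻¹ (toAdd v)
  show ∑ i, toAdd (permAut n σ v) i = 0
  exact h.trans hv

def permAutVe (n : ℕ) : Equiv.Perm (Fin n) →* MulAut (Ve n) where
  toFun σ :=
    { toFun := fun v => ⟨permAut n σ (v : Vn n), permAut_mem_Ve σ v.2⟩
      invFun := fun v => ⟨permAut n σ⁻¹ (v : Vn n), permAut_mem_Ve σ⁻¹ v.2⟩
      left_inv := fun v => Subtype.ext <| Multiplicative.toAdd.injective <| funext fun i => by simp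
      right_inv := fun v => Subtype.ext <| Multiplicative.toAdd.injective <| funext fun i => by simp
      map_mul' := fun v w => Subtype.ext (map_mul (permAut n σ) (v : Vn n) (w : Vn n)) }
  map_one' := rfl
  map_mul' := fun σ τ => rfl

/-- The Weyl group of `Bₙ` (equivalently `Cₙ`). -/
abbrev WB (n : ℕ) := Vn n ⋊[permAut n] Equiv.Perm (Fin n)

/-- The Weyl group of `Dₙ`. -/
abbrev WD (n : ℕ) := Ve n ⋊[permAutVe n] Equiv.Perm (Fin n)

open scoped commutatorElement

section CorePart
open Function
/-- "Trivial or simple nonabelian" -/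
def TOSN (T : Type*) [Group T] : Prop :=
  Subsingleton T ∨ (IsSimpleGroup T ∧ ∃ a b : T, a * b ≠ b * a)

lemma TOSN_congr {G H : Type*} [Group G] [Group H] (e : G ≃* H) (h : TOSN G) : TOSN H := by
  rcases h with h | ⟨hs, a, b, hab⟩
  · exact Or.inl (e.symm.toEquiv.injective.subsingleton)
  · refine Or.inr ⟨?_, e a, e b, fun hc => hab ?_⟩
    · haveI := hs
      haveI : Nontrivial H := e.symm.toEquiv.nontrivial
      exact IsSimpleGroup.isSimpleGroup_of_surjective e.toMonoidHom e.surjective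
    · have := congrArg e.symm hc
      simpa [map_mul] using this

universe u v

theorem core_lemma : ∀ (r : ℕ) (D : Type u) [Group D] (N : Fin r → Subgroup D)
    [∀ i, (N i).Normal],
    (⨅ i, N i) = ⊥ → (∀ i, TOSN (D ⧸ N i)) →
    ∀ (Q : Type v) [Group Q] (φ : D →* Q), Surjective φ →
    ∀ A : Subgroup Q, A.Normal → (∀ a ∈ A, ∀ b ∈ A, a * b = b * a) → A = ⊥ := by
  intro r
  induction r with
  | zero =>
    intro D _ N _ hbot _ Q _ φ hφ A _ _
    have hD : ∀ d : D, d = 1 := by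
      intro d
      have : d ∈ (⊥ : Subgroup D) := hbot ▸ (by rw [iInf_of_empty]; trivial : d ∈ ⨅ i : Fin 0, N i)
      simpa using this
    rw [eq_bot_iff]
    intro a ha
    obtain ⟨d, rfl⟩ := hφ a
    rw [hD d, map_one]; exact Subgroup.one_mem _
  | succ r IH =>
    intro D _ N hnorm hbot htosn Q _ φ hφ A hA hAab
    set K : Subgroup D := N (Fin.last r) with hK
    haveI hKn : K.Normal := hnorm _
    set π := QuotientGroup.mk' K with hπ
    have hπs : Surjective π := QuotientGroup.mk'_surjective K
    have hmemK : ∀ x : D, π x = 1 → x ∈ K := by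
      intro x hx
      exact (QuotientGroup.eq_one_iff x).mp hx
    -- Step 1 : A ≤ map φ K
    have hAK : A ≤ Subgroup.map φ K := by
      rcases htosn (Fin.last r) with hss | ⟨hsimp, hna⟩
      · -- quotient trivial: K = ⊤
        have hKtop : K = ⊤ := by
          rw [eq_top_iff]
          intro d _
          exact hmemK d (Subsingleton.elim _ _)
        rw [hKtop]
        intro a _
        obtain ⟨d, rfl⟩ := hφ a
        exact ⟨d, trivial, rfl⟩
      · haveI := hsimp
        have hkern : (Subgroup.map π φ.ker).Normal := (MonoidHom.normal_ker φ).map π hπs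
        rcases hkern.eq_bot_or_eq_top with hker | hker
        · -- ker φ ≤ K
          have hkK : φ.ker ≤ K := by
            intro x hx
            have : π x ∈ Subgroup.map π φ.ker := ⟨x, hx, rfl⟩
            rw [hker] at this
            exact hmemK x (by simpa using this)
          set B := Subgroup.comap φ A with hB
          haveI hBn : B.Normal := hA.comap φ
          have hBmapn : (Subgroup.map π B).Normal := hBn.map π hπs
          rcases hBmapn.eq_bot_or_eq_top with hBm | hBm
          · have hBK : B ≤ K := by
              intro x hx
              have : π x ∈ Subgroup.map π B := ⟨x, hx, rfl⟩
              rw [hBm] at this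
              exact hmemK x (by simpa using this)
            calc A = Subgroup.map φ (Subgroup.comap φ A) :=
                  (Subgroup.map_comap_eq_self_of_surjective hφ A).symm
              _ ≤ Subgroup.map φ K := Subgroup.map_mono hBK
          · exfalso
            obtain ⟨a, b, hab⟩ := hna
            obtain ⟨x, hx, rfl⟩ : a ∈ Subgroup.map π B := hBm ▸ Subgroup.mem_top a
            obtain ⟨y, hy, rfl⟩ : b ∈ Subgroup.map π B := hBm ▸ Subgroup.mem_top b
            apply hab
            rw [← commutatorElement_eq_one_iff_mul_comm, ← map_commutatorElement]
            have hc : ⁅x, y⁆ ∈ φ.ker := by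
              rw [MonoidHom.mem_ker, map_commutatorElement,
                commutatorElement_eq_one_iff_mul_comm]
              exact hAab _ hx _ hy
            have : ⁅x, y⁆ ∈ K := hkK hc
            rw [QuotientGroup.mk'_apply, QuotientGroup.eq_one_iff]
            exact this
        · -- π (ker φ) = ⊤ : then map φ K = ⊤
          intro q _
          obtain ⟨d, rfl⟩ := hφ q
          have : π d ∈ Subgroup.map π φ.ker := hker ▸ Subgroup.mem_top _
          obtain ⟨z, hz, hzd⟩ := this
          obtain ⟨k, hk, hzk⟩ := (QuotientGroup.mk'_eq_mk' K).mp hzd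
          refine ⟨k, hk, ?_⟩
          rw [← hzk, map_mul]
          have : φ z = 1 := hz
          rw [this, one_mul]
    -- Step 2 : recursion
    let N' : Fin r → Subgroup ↥K := fun i => (N i.castSucc).subgroupOf K
    haveI : ∀ i, (N' i).Normal := fun i => (hnorm i.castSucc).subgroupOf K
    have hbot' : (⨅ i, N' i) = ⊥ := by
      have h1 : (⨅ i, N' i) = (⨅ i : Fin r, N i.castSucc).subgroupOf K := by
        simp only [N', Subgroup.subgroupOf, Subgroup.comap_iInf]
      rw [h1, Subgroup.subgroupOf_eq_bot]
      rw [disjoint_iff]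
      have : (⨅ i : Fin r, N i.castSucc) ⊓ K = ⨅ i : Fin (r + 1), N i := by
        apply le_antisymm
        · apply le_iInf
          intro i
          refine Fin.lastCases ?_ (fun j => ?_) i
          · exact inf_le_right
          · exact inf_le_left.trans (iInf_le _ j)
        · exact le_inf (le_iInf fun j => iInf_le _ j.castSucc) (iInf_le _ (Fin.last r))
      rw [this, hbot]
    have htosn' : ∀ i, TOSN (↥K ⧸ N' i) := by
      intro i
      set ψ : ↥K →* D ⧸ N i.castSucc :=
        (QuotientGroup.mk' (N i.castSucc)).comp K.subtype with hψ
      have hkerψ : ψ.ker = N' i := by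
        rw [hψ, ← MonoidHom.comap_ker, QuotientGroup.ker_mk']
        rfl
      have hsub : ψ.ker = ⊤ → TOSN (↥K ⧸ N' i) := by
        intro h
        left
        have hN'top : N' i = ⊤ := by rw [← hkerψ, h]
        constructor
        intro x y
        induction x using QuotientGroup.induction_on
        induction y using QuotientGroup.induction_on
        rw [QuotientGroup.eq]
        rw [hN'top]
        trivial
      rcases htosn i.castSucc with hss | ⟨hsimp, hna⟩
      · apply hsub
        rw [eq_top_iff]
        intro x _
        exact Subsingleton.elim _ _
      · haveI := hsimp
        have hrangen : ψ.range.Normal := by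
          constructor
          intro q hq g
          obtain ⟨k, rfl⟩ := hq
          obtain ⟨d, rfl⟩ := QuotientGroup.mk'_surjective (N i.castSucc) g
          refine ⟨⟨d * (k : D) * d⁻¹, hKn.conj_mem _ k.2 d⟩, ?_⟩
          simp [ψ, map_mul]
        rcases hrangen.eq_bot_or_eq_top with hr | hr
        · apply hsub
          rw [eq_top_iff]
          intro x _
          have : ψ x ∈ ψ.range := ⟨x, rfl⟩
          rw [hr] at this
          simpa [MonoidHom.mem_ker] using this
        · have hψs : Surjective ψ := MonoidHom.range_eq_top.mp hr
          have e := QuotientGroup.quotientKerEquivOfSurjective ψ hψs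
          have e2 := QuotientGroup.quotientMulEquivOfEq hkerψ
          exact TOSN_congr (e.symm.trans e2) (Or.inr ⟨hsimp, hna⟩)
    -- apply IH
    have hres := IH ↥K N' hbot' htosn' ↥(Subgroup.map φ K) (φ.subgroupMap K)
      (φ.subgroupMap_surjective K) (A.subgroupOf (Subgroup.map φ K))
      (hA.subgroupOf _) ?_
    · rw [Subgroup.subgroupOf_eq_bot] at hres
      exact hres.eq_bot_of_le hAK
    · intro a ha b hb
      have := hAab a.1 ha b.1 hb
      exact Subtype.ext this

end CorePart

lemma perm_inv_apply_self {α : Type*} (σ : Equiv.Perm α) (x : α) : σ⁻¹ (σ x) = x :=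
  Equiv.Perm.inv_eq_iff_eq.mpr rfl

lemma perm_apply_inv_self {α : Type*} (σ : Equiv.Perm α) (x : α) : σ (σ⁻¹ x) = x :=
  (Equiv.eq_symm_apply σ).mp rfl

section SimplePart
open Function Equiv Equiv.Perm
lemma viaEmbeddingHom_swap {α β : Type*} [DecidableEq α] [DecidableEq β] [Fintype α]
    (e : α ↪ β) (i j : α) :
    Equiv.Perm.viaEmbeddingHom e (Equiv.swap i j) = Equiv.swap (e i) (e j) := by
  rw [Perm.viaEmbeddingHom_apply]
  ext x
  by_cases hx : x ∈ Set.range e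
  · obtain ⟨y, rfl⟩ := hx
    rw [Perm.viaEmbedding_apply]
    rcases eq_or_ne y i with rfl | hyi
    · simp
    · rcases eq_or_ne y j with rfl | hyj
      · simp
      · rw [swap_apply_of_ne_of_ne hyi hyj,
          swap_apply_of_ne_of_ne (fun hc => hyi (e.injective hc))
            (fun hc => hyj (e.injective hc))]
  · rw [Perm.viaEmbedding_apply_of_notMem _ _ x hx,
      swap_apply_of_ne_of_ne (fun hc => hx ⟨i, hc.symm⟩) (fun hc => hx ⟨j, hc.symm⟩)]

lemma sign_viaEmbedding {α β : Type*} [DecidableEq α] [DecidableEq β] [Fintype α] [Fintype β]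
    (e : α ↪ β) (p : Perm α) :
    Equiv.Perm.sign (Equiv.Perm.viaEmbeddingHom e p) = Equiv.Perm.sign p := by
  have key : ∀ l : List (Perm α), (∀ x ∈ l, x.IsSwap) →
      Equiv.Perm.sign (Equiv.Perm.viaEmbeddingHom e l.prod) = Equiv.Perm.sign l.prod := by
    intro l
    induction l with
    | nil => intro _; simp
    | cons x xs ih =>
      intro hl
      obtain ⟨i, j, hij, rfl⟩ := hl x List.mem_cons_self
      rw [List.prod_cons, map_mul, map_mul, map_mul, viaEmbeddingHom_swap,
        Equiv.Perm.sign_swap hij, Equiv.Perm.sign_swap (fun hc => hij (e.injective hc)),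
        ih (fun y hy => hl y (List.mem_cons_of_mem _ hy))]
  obtain ⟨l, hprod, hswap⟩ := (Equiv.Perm.truncSwapFactors p).out
  rw [← hprod]
  exact key l hswap

theorem alternating_isSimple (n : ℕ) (h5 : 5 ≤ n) :
    IsSimpleGroup ↥(alternatingGroup (Fin n)) := by
  haveI : Nontrivial ↥(alternatingGroup (Fin n)) := by
    apply alternatingGroup.nontrivial_of_three_le_card
    rw [Nat.card_fin]; omega
  constructor
  intro N' hN'
  by_cases hbot : N' = ⊥
  · exact Or.inl hbot
  right
  obtain ⟨⟨g, hgA⟩, hgN, hg1⟩ : ∃ x : ↥(alternatingGroup (Fin n)), x ∈ N' ∧ x ≠ 1 := by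
    by_contra hcon
    push_neg at hcon
    apply hbot
    rw [eq_bot_iff]
    intro x hx
    simpa [Subgroup.mem_bot] using hcon x hx
  have hg1' : g ≠ 1 := fun hEq => hg1 (Subtype.ext hEq)
  obtain ⟨a, ha⟩ : ∃ a, g a ≠ a := by
    by_contra hcon
    push_neg at hcon
    exact hg1' (Equiv.ext hcon)
  obtain ⟨c, hc⟩ : ∃ c, c ∉ ({a, g a, g⁻¹ a} : Finset (Fin n)) := by
    by_contra hcon
    push_neg at hcon
    have hsub : (Finset.univ : Finset (Fin n)) ⊆ {a, g a, g⁻¹ a} := fun x _ => hcon x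
    have hcard := Finset.card_le_card hsub
    have h3 : ({a, g a, g⁻¹ a} : Finset (Fin n)).card ≤ 3 := by
      apply le_trans (Finset.card_insert_le _ _)
      have := Finset.card_insert_le (g a) ({g⁻¹ a} : Finset (Fin n))
      simp at this ⊢
      omega
    rw [Finset.card_univ, Fintype.card_fin] at hcard
    omega
  simp only [Finset.mem_insert, Finset.mem_singleton] at hc
  push_neg at hc
  obtain ⟨hca, hcb, hcg⟩ := hc
  have hab : a ≠ g a := fun hEq => ha hEq.symm
  set b := g a with hbdef
  -- the 3-cycle σ : a → c → b → a
  set σ := Equiv.swap a b * Equiv.swap a c with hσ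
  have hσa : σ a = c := by
    simp only [hσ, Perm.mul_apply, swap_apply_left]
    exact swap_apply_of_ne_of_ne hca hcb
  have hσb : σ b = a := by
    simp only [hσ, Perm.mul_apply]
    rw [swap_apply_of_ne_of_ne (Ne.symm hab) (Ne.symm hcb), swap_apply_right]
  have hσA : σ ∈ alternatingGroup (Fin n) := by
    rw [Equiv.Perm.mem_alternatingGroup, map_mul, sign_swap hab, sign_swap (Ne.symm hca)]
    simp
  set h : Perm (Fin n) := g * (σ * g⁻¹ * σ⁻¹) with hh
  have hhA : h ∈ alternatingGroup (Fin n) := by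
    rw [Equiv.Perm.mem_alternatingGroup] at hσA hgA ⊢
    simp [hh, hσA, hgA]
  have hhN : (⟨h, hhA⟩ : ↥(alternatingGroup (Fin n))) ∈ N' := by
    have hmem : (⟨g, hgA⟩ : ↥(alternatingGroup (Fin n))) *
        (⟨σ, hσA⟩ * (⟨g, hgA⟩)⁻¹ * (⟨σ, hσA⟩)⁻¹) ∈ N' :=
      mul_mem hgN (hN'.conj_mem _ (inv_mem hgN) _)
    convert hmem using 1
    exact Subtype.ext rfl
  have hha : h a = g c := by
    have h1 : σ⁻¹ a = b := by rw [← hσb, perm_inv_apply_self]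
    simp only [hh, Perm.mul_apply, h1]
    rw [hbdef, perm_inv_apply_self, hσa]
  have hh1 : h ≠ 1 := by
    intro hEq
    have hfix : h a = a := by rw [hEq]; rfl
    rw [hha] at hfix
    exact hcg (by rw [← hfix, perm_inv_apply_self])
  -- support of h is contained in T
  set T : Finset (Fin n) := {a, b, c, g b, g c} with hT
  have hσsupp : σ.support ⊆ {a, b, c} := by
    intro x hx
    rcases Finset.mem_union.mp (Equiv.Perm.support_mul_le _ _ hx) with hx' | hx'
    · rw [Equiv.Perm.support_swap hab] at hx'
      simp only [Finset.mem_insert, Finset.mem_singleton] at hx' ⊢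
      tauto
    · rw [Equiv.Perm.support_swap (Ne.symm hca ∘ Eq.symm ∘ Eq.symm)] at hx'
      · simp only [Finset.mem_insert, Finset.mem_singleton] at hx' ⊢
        tauto
  have hTsupp : h.support ⊆ T := by
    have hconj : h = (g * σ * g⁻¹) * σ⁻¹ := by simp [hh, mul_assoc]
    intro x hx
    rw [hconj] at hx
    rcases Finset.mem_union.mp (Equiv.Perm.support_mul_le _ _ hx) with hx' | hx'
    · rw [Equiv.Perm.support_conj] at hx'
      obtain ⟨y, hy, rfl⟩ := Finset.mem_map.mp hx'
      have := hσsupp hy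
      simp only [Finset.mem_insert, Finset.mem_singleton, hT, toEmbedding_apply] at this ⊢
      rcases this with rfl | rfl | rfl
      · right; left; rfl
      · right; right; right; left; rfl
      · right; right; right; right; rfl
    · rw [Equiv.Perm.support_inv] at hx'
      have := hσsupp hx'
      simp only [Finset.mem_insert, Finset.mem_singleton, hT] at this ⊢
      tauto
  have hTcard : T.card ≤ 5 := by
    refine le_trans (Finset.card_insert_le _ _) ?_
    refine Nat.succ_le_succ (le_trans (Finset.card_insert_le _ _) ?_)
    refine Nat.succ_le_succ (le_trans (Finset.card_insert_le _ _) ?_)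
    refine Nat.succ_le_succ (le_trans (Finset.card_insert_le _ _) ?_)
    simp
  obtain ⟨S, hTS, hScard⟩ := Finset.exists_superset_card_eq hTcard
    (by rw [Fintype.card_fin]; exact h5)
  have hsupp : h.support ⊆ S := le_trans hTsupp hTS
  set ε : ↥S ≃ Fin 5 := S.equivFinOfCardEq hScard with hε
  set e : Fin 5 ↪ Fin n :=
    (ε.symm.toEmbedding.trans (Function.Embedding.subtype _)) with he
  have he_apply : ∀ y : Fin 5, e y = ((ε.symm y : ↥S) : Fin n) := fun y => rfl
  have hrange : Set.range e = ↑S := by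
    ext y
    constructor
    · rintro ⟨x, rfl⟩
      exact (ε.symm x).2
    · intro hy
      exact ⟨ε ⟨y, hy⟩, by rw [he_apply, Equiv.symm_apply_apply]⟩
  set Φ := Equiv.Perm.viaEmbeddingHom e with hΦ
  have hp : ∀ x : Fin n, x ∈ S ↔ h x ∈ S := by
    intro x
    constructor
    · intro hx
      by_cases hfix : h x = x
      · rwa [hfix]
      · exact hsupp (Equiv.Perm.apply_mem_support.mpr (Equiv.Perm.mem_support.mpr hfix))
    · intro hx
      by_cases hfix : h x = x
      · rwa [← hfix]
      · exact hsupp (Equiv.Perm.mem_support.mpr hfix)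
  set h₅ : Perm (Fin 5) := ε.permCongr (h.subtypePerm (fun x => (hp x).symm)) with hh5
  have hΦh : Φ h₅ = h := by
    ext x
    by_cases hx : x ∈ S
    · have hxe : x = e (ε ⟨x, hx⟩) := by
        rw [he_apply, Equiv.symm_apply_apply]
      conv_lhs => rw [hxe, hΦ, Perm.viaEmbeddingHom_apply, Perm.viaEmbedding_apply]
      rw [hh5]
      simp only [Equiv.permCongr_apply, Equiv.symm_apply_apply]
      rw [he_apply, Equiv.symm_apply_apply]
      rfl
    · rw [hΦ, Perm.viaEmbeddingHom_apply, Perm.viaEmbedding_apply_of_notMem _ _ x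
        (by rw [hrange]; exact hx)]
      have hxx : h x = x := by
        by_contra hfix
        exact hx (hsupp (Equiv.Perm.mem_support.mpr hfix))
      exact congrArg _ hxx.symm
  have hsign5 : ∀ q : Perm (Fin 5), Equiv.Perm.sign (Φ q) = Equiv.Perm.sign q :=
    fun q => sign_viaEmbedding e q
  have hh5A : h₅ ∈ alternatingGroup (Fin 5) := by
    rw [Equiv.Perm.mem_alternatingGroup, ← hsign5, hΦh]
    exact Equiv.Perm.mem_alternatingGroup.mp hhA
  -- the pullback subgroup
  set NN : Subgroup (Perm (Fin n)) :=
    Subgroup.map (alternatingGroup (Fin n)).subtype N' with hNN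
  have hNNconj : ∀ w ∈ alternatingGroup (Fin n), ∀ z ∈ NN, w * z * w⁻¹ ∈ NN := by
    intro w hw z hz
    obtain ⟨y, hyN, rfl⟩ := hz
    refine ⟨(⟨w, hw⟩ : ↥(alternatingGroup (Fin n))) * y * (⟨w, hw⟩)⁻¹,
      hN'.conj_mem _ hyN _, rfl⟩
  set M : Subgroup (Perm (Fin 5)) := Subgroup.comap Φ NN with hM
  have hMA_norm : (M.subgroupOf (alternatingGroup (Fin 5))).Normal := by
    constructor
    rintro m hm p
    rw [Subgroup.mem_subgroupOf] at hm ⊢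
    have hpA : Φ (p : Perm (Fin 5)) ∈ alternatingGroup (Fin n) := by
      rw [Equiv.Perm.mem_alternatingGroup, hsign5]
      exact Equiv.Perm.mem_alternatingGroup.mp p.2
    show Φ ((p * m * p⁻¹ : ↥(alternatingGroup (Fin 5))) : Perm (Fin 5)) ∈ NN
    have hcoe : ((p * m * p⁻¹ : ↥(alternatingGroup (Fin 5))) : Perm (Fin 5)) =
        (p : Perm (Fin 5)) * (m : Perm (Fin 5)) * (p : Perm (Fin 5))⁻¹ := rfl
    rw [hcoe, map_mul, map_mul, map_inv]
    exact hNNconj _ hpA _ hm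
  haveI := alternatingGroup.isSimpleGroup_five
  have hMA_top : M.subgroupOf (alternatingGroup (Fin 5)) = ⊤ := by
    rcases hMA_norm.eq_bot_or_eq_top with hMB | hMB
    · exfalso
      have h5M : h₅ ∈ M := by
        show Φ h₅ ∈ NN
        rw [hΦh]
        exact ⟨⟨h, hhA⟩, hhN, rfl⟩
      have hmem5 : (⟨h₅, hh5A⟩ : ↥(alternatingGroup (Fin 5))) ∈
          M.subgroupOf (alternatingGroup (Fin 5)) := by
        rw [Subgroup.mem_subgroupOf]; exact h5M
      rw [hMB, Subgroup.mem_bot] at hmem5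
      apply hh1
      rw [← hΦh]
      have h51 : h₅ = 1 := by simpa using congrArg Subtype.val hmem5
      rw [h51, map_one]
    · exact hMB
  -- extract a three-cycle
  have h01 : (0 : Fin 5) ≠ 1 := by decide
  have h02 : (0 : Fin 5) ≠ 2 := by decide
  have h12 : (1 : Fin 5) ≠ 2 := by decide
  set t₅ : Perm (Fin 5) := Equiv.swap 0 1 * Equiv.swap 0 2 with ht5
  have ht5tc : Equiv.Perm.IsThreeCycle t₅ :=
    Equiv.Perm.isThreeCycle_swap_mul_swap_same h01 h02 h12
  have ht5A : t₅ ∈ alternatingGroup (Fin 5) := ht5tc.mem_alternatingGroup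
  have ht5M : t₅ ∈ M := by
    have : (⟨t₅, ht5A⟩ : ↥(alternatingGroup (Fin 5))) ∈
        M.subgroupOf (alternatingGroup (Fin 5)) := by rw [hMA_top]; trivial
    rwa [Subgroup.mem_subgroupOf] at this
  have httc : Equiv.Perm.IsThreeCycle (Φ t₅) := by
    rw [ht5, map_mul, hΦ, viaEmbeddingHom_swap, viaEmbeddingHom_swap]
    exact Equiv.Perm.isThreeCycle_swap_mul_swap_same
      (fun hc => h01 (e.injective hc)) (fun hc => h02 (e.injective hc))
      (fun hc => h12 (e.injective hc))
  have htN : (⟨Φ t₅, httc.mem_alternatingGroup⟩ : ↥(alternatingGroup (Fin n))) ∈ N' := by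
    obtain ⟨y, hyN, hy1⟩ := ht5M
    have hye : (⟨Φ t₅, httc.mem_alternatingGroup⟩ : ↥(alternatingGroup (Fin n))) = y :=
      Subtype.ext hy1.symm
    rw [hye]; exact hyN
  -- conclude
  have hclosure := httc.alternating_normalClosure (by rw [Nat.card_fin]; exact h5)
  rw [eq_top_iff, ← hclosure]
  apply Subgroup.normalClosure_le_normal
  intro x hx
  rw [Set.mem_singleton_iff] at hx
  subst hx
  exact htN

end SimplePart

section PermPart
open Function Equiv Equiv.Perm Subgroup
lemma commutator_le_alternating (m : ℕ) :
    ⁅(⊤ : Subgroup (Perm (Fin m))), (⊤ : Subgroup (Perm (Fin m)))⁆ ≤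
      alternatingGroup (Fin m) := by
  rw [Subgroup.commutator_le]
  intro g1 _ g2 _
  rw [Equiv.Perm.mem_alternatingGroup, map_commutatorElement,
    commutatorElement_eq_one_iff_mul_comm]
  exact mul_comm _ _

lemma map_subtype_derivedSeries {G : Type*} [Group G] (H : Subgroup G) :
    Subgroup.map H.subtype (derivedSeries ↥H 2) = ⁅⁅H, H⁆, ⁅H, H⁆⁆ := by
  have h0 : Subgroup.map H.subtype (derivedSeries ↥H 0) = H := by
    rw [derivedSeries_zero]
    ext x
    simp [Subgroup.mem_map]
  have h1 : Subgroup.map H.subtype (derivedSeries ↥H 1) = ⁅H, H⁆ := by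
    rw [derivedSeries_succ, Subgroup.map_commutator, h0]
  rw [derivedSeries_succ, Subgroup.map_commutator, h1]

lemma alternating_three_comm :
    ∀ x ∈ alternatingGroup (Fin 3), ∀ y ∈ alternatingGroup (Fin 3), x * y = y * x := by
  haveI : Fact (Nat.Prime 3) := ⟨by norm_num⟩
  have hcard : Fintype.card ↥(alternatingGroup (Fin 3)) = 3 := by
    have h2 := two_mul_card_alternatingGroup (α := Fin 3)
    rw [Fintype.card_perm, Fintype.card_fin] at h2
    have h6 : Nat.factorial 3 = 6 := rfl
    rw [h6] at h2
    omega
  haveI : IsCyclic ↥(alternatingGroup (Fin 3)) := isCyclic_of_prime_card (by rw [Nat.card_eq_fintype_card, hcard] : Nat.card ↥(alternatingGroup (Fin 3)) = 3)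
  letI : CommGroup ↥(alternatingGroup (Fin 3)) := IsCyclic.commGroup
  intro x hx y hy
  have := mul_comm (⟨x, hx⟩ : ↥(alternatingGroup (Fin 3))) ⟨y, hy⟩
  exact congrArg Subtype.val this

lemma ds2_perm3 : derivedSeries (Perm (Fin 3)) 2 = ⊥ := by
  rw [eq_bot_iff]
  have h1 : derivedSeries (Perm (Fin 3)) 1 ≤ alternatingGroup (Fin 3) := by
    rw [derivedSeries_succ, derivedSeries_zero]
    exact commutator_le_alternating 3
  calc derivedSeries (Perm (Fin 3)) 2
      ≤ ⁅alternatingGroup (Fin 3), alternatingGroup (Fin 3)⁆ := by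
        rw [derivedSeries_succ]
        exact Subgroup.commutator_mono h1 h1
    _ ≤ ⊥ := by
        rw [Subgroup.commutator_le]
        intro g1 h1' g2 h2'
        rw [Subgroup.mem_bot, commutatorElement_eq_one_iff_mul_comm]
        exact alternating_three_comm g1 h1' g2 h2'

lemma alternating_nonabelian {n : ℕ} (h5 : 5 ≤ n) :
    ∃ a b : ↥(alternatingGroup (Fin n)), a * b ≠ b * a := by
  set i0 : Fin n := ⟨0, by omega⟩
  set i1 : Fin n := ⟨1, by omega⟩
  set i2 : Fin n := ⟨2, by omega⟩
  set i3 : Fin n := ⟨3, by omega⟩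
  have h01 : i0 ≠ i1 := by simp [i0, i1, Fin.ext_iff]
  have h02 : i0 ≠ i2 := by simp [i0, i2, Fin.ext_iff]
  have h03 : i0 ≠ i3 := by simp [i0, i3, Fin.ext_iff]
  have h12 : i1 ≠ i2 := by simp [i1, i2, Fin.ext_iff]
  have h13 : i1 ≠ i3 := by simp [i1, i3, Fin.ext_iff]
  have h23 : i2 ≠ i3 := by simp [i2, i3, Fin.ext_iff]
  set t1 : Perm (Fin n) := Equiv.swap i0 i1 * Equiv.swap i0 i2 with ht1
  set t2 : Perm (Fin n) := Equiv.swap i0 i1 * Equiv.swap i0 i3 with ht2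
  have ht1A : t1 ∈ alternatingGroup (Fin n) := by
    rw [Equiv.Perm.mem_alternatingGroup, map_mul, sign_swap h01, sign_swap h02]; simp
  have ht2A : t2 ∈ alternatingGroup (Fin n) := by
    rw [Equiv.Perm.mem_alternatingGroup, map_mul, sign_swap h01, sign_swap h03]; simp
  refine ⟨⟨t1, ht1A⟩, ⟨t2, ht2A⟩, fun hc => ?_⟩
  have hc' : t1 * t2 = t2 * t1 := congrArg Subtype.val hc
  have happ := congrArg (fun p : Perm (Fin n) => p i0) hc'
  simp only [Perm.mul_apply] at happ
  rw [show t2 i0 = i3 by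
      simp only [ht2, Perm.mul_apply, swap_apply_left]
      exact swap_apply_of_ne_of_ne (Ne.symm h03) (Ne.symm h13),
    show t1 i3 = i3 by
      simp only [ht1, Perm.mul_apply]
      rw [swap_apply_of_ne_of_ne (Ne.symm h03) h23.symm,
        swap_apply_of_ne_of_ne (Ne.symm h03) (Ne.symm h13)],
    show t1 i0 = i2 by
      simp only [ht1, Perm.mul_apply, swap_apply_left]
      exact swap_apply_of_ne_of_ne (Ne.symm h02) (Ne.symm h12),
    show t2 i2 = i2 by
      simp only [ht2, Perm.mul_apply]
      rw [swap_apply_of_ne_of_ne (Ne.symm h02) h23,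
        swap_apply_of_ne_of_ne (Ne.symm h02) (Ne.symm h12)]] at happ
  exact h23 happ.symm

theorem perm_tosn (n : ℕ) (hn : 3 ≤ n) (hn4 : n ≠ 4)
    (H : Subgroup (Perm (Fin n))) (hH : H.Normal) :
    TOSN ↥(derivedSeries ↥H 2) := by
  haveI := hH
  have hinj : Function.Injective H.subtype := Subgroup.subtype_injective H
  rcases eq_or_ne n 3 with rfl | hn3
  · -- n = 3 : solvable, second derived subgroup trivial
    left
    have hmap : Subgroup.map H.subtype (derivedSeries ↥H 2) = ⊥ := by
      rw [eq_bot_iff, ← ds2_perm3]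
      exact map_derivedSeries_le_derivedSeries H.subtype 2
    have hds : derivedSeries ↥H 2 = ⊥ :=
      ((Subgroup.map_eq_bot_iff_of_injective _ hinj).mp hmap)
    rw [hds]
    infer_instance
  · have h5 : 5 ≤ n := by omega
    haveI hsimple := alternating_isSimple n h5
    set H2 : Subgroup (Perm (Fin n)) := ⁅⁅H, H⁆, ⁅H, H⁆⁆ with hH2
    have hmap : Subgroup.map H.subtype (derivedSeries ↥H 2) = H2 :=
      map_subtype_derivedSeries H
    haveI hH2n : H2.Normal := by
      haveI : Subgroup.Normal ⁅H, H⁆ := Subgroup.commutator_normal H H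
      exact Subgroup.commutator_normal _ _
    have hH2A : H2 ≤ alternatingGroup (Fin n) := by
      have hc1 : ⁅H, H⁆ ≤ (⊤ : Subgroup (Perm (Fin n))) := le_top
      calc H2 ≤ ⁅(⊤ : Subgroup (Perm (Fin n))), ⊤⁆ := Subgroup.commutator_mono hc1 hc1
        _ ≤ alternatingGroup (Fin n) := commutator_le_alternating n
    haveI : (H2.subgroupOf (alternatingGroup (Fin n))).Normal :=
      Subgroup.normal_subgroupOf
    rcases Subgroup.Normal.eq_bot_or_eq_top
        (H := H2.subgroupOf (alternatingGroup (Fin n))) inferInstance with hcase | hcase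
    · -- H2 = ⊥
      left
      have : H2 = ⊥ := by
        have hd : Disjoint H2 (alternatingGroup (Fin n)) :=
          Subgroup.subgroupOf_eq_bot.mp hcase
        exact hd.eq_bot_of_le hH2A
      have hds : derivedSeries ↥H 2 = ⊥ :=
        ((Subgroup.map_eq_bot_iff_of_injective _ hinj).mp (by rw [hmap, this]))
      rw [hds]; infer_instance
    · -- H2 = alternating
      right
      have hH2eq : H2 = alternatingGroup (Fin n) :=
        le_antisymm hH2A (Subgroup.subgroupOf_eq_top.mp hcase)
      have e1 : ↥(derivedSeries ↥H 2) ≃* ↥H2 :=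
        (hmap ▸ (derivedSeries ↥H 2).equivMapOfInjective H.subtype hinj)
      have e2 : ↥H2 ≃* ↥(alternatingGroup (Fin n)) := MulEquiv.subgroupCongr hH2eq
      have e := e1.trans e2
      obtain ⟨a, b, hab⟩ := alternating_nonabelian h5
      haveI : Nontrivial ↥(derivedSeries ↥H 2) := e.toEquiv.nontrivial
      refine ⟨IsSimpleGroup.isSimpleGroup_of_surjective (G := ↥(alternatingGroup (Fin n)))
        e.symm.toMonoidHom e.symm.surjective, e.symm a, e.symm b, fun hc => hab ?_⟩
      have := congrArg e hc
      exact e.symm.injective (by rw [map_mul, map_mul]; exact hc)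
  

end PermPart

section WeylPart
-- === helpers ===
open SemidirectProduct Equiv Function

lemma zmod2_add_self : ∀ c : ZMod 2, c + c = 0 := by decide
lemma zmod2_neg : ∀ c : ZMod 2, -c = c := by decide
lemma zmod2_cases : ∀ c : ZMod 2, c = 0 ∨ c = 1 := by decide

lemma sd_commutator {N G : Type*} [Group N] [Group G] (φ : G →* MulAut N) (v : N) (g : G) :
    ⁅(inl v : N ⋊[φ] G), (inr g : N ⋊[φ] G)⁆ = inl (v * φ g v⁻¹) := by
  rw [commutatorElement_def, map_mul]
  have h1 : (inl v : N ⋊[φ] G)⁻¹ = inl v⁻¹ := (map_inv _ _).symm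
  have h2 : (inr g : N ⋊[φ] G)⁻¹ = inr g⁻¹ := (map_inv _ _).symm
  rw [h1, h2]
  have h3 : (inl (φ g v⁻¹) : N ⋊[φ] G) = inr g * inl v⁻¹ * inr g⁻¹ := inl_aut g v⁻¹
  rw [h3]
  simp only [mul_assoc]

lemma sd_conj {N G : Type*} [CommGroup N] [Group G] (φ : G →* MulAut N) (v : N)
    (g : N ⋊[φ] G) :
    g * inl v * g⁻¹ = inl (φ g.right v) := by
  conv_lhs => rw [← inl_left_mul_inr_right g]
  rw [mul_inv_rev]
  have h1 : (inl g.left : N ⋊[φ] G)⁻¹ = inl g.left⁻¹ := (map_inv _ _).symm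
  have h2 : (inr g.right : N ⋊[φ] G)⁻¹ = inr g.right⁻¹ := (map_inv _ _).symm
  rw [h1, h2]
  have h3 : (inl (φ g.right v) : N ⋊[φ] G) = inr g.right * inl v * inr g.right⁻¹ :=
    inl_aut g.right v
  have : (inl g.left * inr g.right * inl v * (inr g.right⁻¹ * inl g.left⁻¹) : N ⋊[φ] G) =
      inl g.left * (inr g.right * inl v * inr g.right⁻¹) * inl g.left⁻¹ := by
    simp only [mul_assoc]
  rw [this, ← h3, ← map_mul, ← map_mul]
  congr 1
  rw [mul_comm g.left _, mul_assoc, mul_inv_cancel, mul_one]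

lemma permAut_ofAdd {n : ℕ} (σ : Equiv.Perm (Fin n)) (u : Fin n → ZMod 2) :
    permAut n σ (ofAdd u) = ofAdd (fun x => u (σ⁻¹ x)) := rfl

lemma vec_aut_comb {n : ℕ} (σ : Equiv.Perm (Fin n)) (u : Fin n → ZMod 2) :
    (ofAdd u) * (permAut n σ ((ofAdd u)⁻¹)) = ofAdd (u + fun x => u (σ⁻¹ x)) := by
  rw [← ofAdd_neg, permAut_ofAdd, ← ofAdd_add]
  congr 1
  funext x
  simp [zmod2_neg]


/-- basis vector -/
def ev {n : ℕ} (i : Fin n) : Fin n → ZMod 2 := Pi.single i 1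

lemma single_comp {n : ℕ} (σ : Equiv.Perm (Fin n)) (j : Fin n) :
    (fun x => ev j (σ⁻¹ x)) = ev (σ j) := by
  funext x
  rw [ev, ev, Pi.single_apply, Pi.single_apply]
  congr 1
  simp only [eq_iff_iff]
  constructor
  · intro h; rw [← h, perm_apply_inv_self]
  · intro h; rw [h, perm_inv_apply_self]

lemma sum_single {n : ℕ} (i : Fin n) : (∑ x, ev i x) = 1 := by
  rw [ev, Finset.sum_pi_single']
  simp

lemma pair_mem_Ve {n : ℕ} (i j : Fin n) :
    (ofAdd (ev i + ev j) : Vn n) ∈ Ve n := by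
  show (∑ x, toAdd (ofAdd (ev i + ev j)) x) = 0
  simp only [toAdd_ofAdd, Pi.add_apply, Finset.sum_add_distrib, sum_single]
  decide

-- vector identity A : (e_i + e_m) + (e_i + e_m)∘(swap i j) = e_i + e_j
lemma vecA {n : ℕ} (i j m : Fin n) (hij : i ≠ j) (hmi : m ≠ i) (hmj : m ≠ j) :
    ((ev i + ev m) + fun x => (ev i + ev m) ((Equiv.swap i j)⁻¹ x)) = ev i + ev j := by
  have hc : (fun x => (ev i + ev m) ((Equiv.swap i j)⁻¹ x)) =
      ev ((Equiv.swap i j) i) + ev ((Equiv.swap i j) m) := by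
    funext x
    have h1 := congrFun (single_comp (Equiv.swap i j) i) x
    have h2 := congrFun (single_comp (Equiv.swap i j) m) x
    simp only [Pi.add_apply]
    rw [h1, h2]
  rw [hc, Equiv.swap_apply_left, Equiv.swap_apply_of_ne_of_ne hmi hmj]
  funext x
  simp only [Pi.add_apply]
  have hcomm : ∀ a b c : ZMod 2, a + b + (c + b) = a + c := by decide
  rw [hcomm]

-- the 3-cycle σ = ⁅swap i j, swap i k⁆ : i → j → k → i
lemma cycle_apply {n : ℕ} (i j k : Fin n) (hij : i ≠ j) (hik : i ≠ k) (hjk : j ≠ k) :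
    (⁅Equiv.swap i j, Equiv.swap i k⁆ : Equiv.Perm (Fin n)) j = k ∧
    (⁅Equiv.swap i j, Equiv.swap i k⁆ : Equiv.Perm (Fin n)) k = i := by
  rw [commutatorElement_def, Equiv.swap_inv, Equiv.swap_inv]
  constructor
  · simp only [Equiv.Perm.mul_apply]
    rw [Equiv.swap_apply_of_ne_of_ne (Ne.symm hij) hjk, Equiv.swap_apply_right,
      Equiv.swap_apply_left, Equiv.swap_apply_of_ne_of_ne (Ne.symm hik) (Ne.symm hjk)]
  · simp only [Equiv.Perm.mul_apply]
    rw [Equiv.swap_apply_right, Equiv.swap_apply_left,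
      Equiv.swap_apply_of_ne_of_ne (Ne.symm hij) hjk, Equiv.swap_apply_right]

-- vector identity B : (e_j + e_k) + (e_j + e_k)∘σ⁻¹ = e_i + e_j  where σ = ⁅swap ij, swap ik⁆
lemma vecB {n : ℕ} (i j k : Fin n) (hij : i ≠ j) (hik : i ≠ k) (hjk : j ≠ k) :
    ((ev j + ev k) + fun x => (ev j + ev k)
        ((⁅Equiv.swap i j, Equiv.swap i k⁆ : Equiv.Perm (Fin n))⁻¹ x)) = ev i + ev j := by
  obtain ⟨hj, hk⟩ := cycle_apply i j k hij hik hjk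
  set σ : Equiv.Perm (Fin n) := ⁅Equiv.swap i j, Equiv.swap i k⁆ with hσ
  have hc : (fun x => (ev j + ev k) (σ⁻¹ x)) = ev (σ j) + ev (σ k) := by
    funext x
    have h1 := congrFun (single_comp σ j) x
    have h2 := congrFun (single_comp σ k) x
    simp only [Pi.add_apply]
    rw [h1, h2]
  rw [hc, hj, hk]
  funext x
  simp only [Pi.add_apply]
  have hcomm : ∀ a b c : ZMod 2, a + b + (b + c) = c + a := by decide
  rw [hcomm]

-- === semidirect derived series membership : WB ===
lemma wb_mem_ds1 {n : ℕ} (i j m : Fin n) (hij : i ≠ j) (hmi : m ≠ i) (hmj : m ≠ j) :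
    (inl (ofAdd (ev i + ev j)) : WB n) ∈ derivedSeries (WB n) 1 := by
  have heq : ⁅(inl (ofAdd (ev i + ev m)) : WB n), (inr (Equiv.swap i j) : WB n)⁆ =
      inl (ofAdd (ev i + ev j)) := by
    rw [sd_commutator, vec_aut_comb, vecA i j m hij hmi hmj]
  rw [← heq, derivedSeries_succ, derivedSeries_zero]
  exact Subgroup.commutator_mem_commutator (Subgroup.mem_top _) (Subgroup.mem_top _)

lemma wb_mem_ds2 {n : ℕ} (hn : 3 ≤ n) (i j : Fin n) (hij : i ≠ j) :
    (inl (ofAdd (ev i + ev j)) : WB n) ∈ derivedSeries (WB n) 2 := by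
  obtain ⟨k, hk⟩ : ∃ k : Fin n, k ∉ ({i, j} : Finset (Fin n)) := by
    by_contra hcon
    push_neg at hcon
    have hsub : (Finset.univ : Finset (Fin n)) ⊆ {i, j} := fun x _ => hcon x
    have hcard := Finset.card_le_card hsub
    have h2 : ({i, j} : Finset (Fin n)).card ≤ 2 := by
      apply le_trans (Finset.card_insert_le _ _); simp
    rw [Finset.card_univ, Fintype.card_fin] at hcard
    omega
  simp only [Finset.mem_insert, Finset.mem_singleton] at hk
  push_neg at hk
  obtain ⟨hki, hkj⟩ := hk
  have hik : i ≠ k := Ne.symm hki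
  have hjk : j ≠ k := Ne.symm hkj
  have heq : ⁅(inl (ofAdd (ev j + ev k)) : WB n),
      (inr (⁅Equiv.swap i j, Equiv.swap i k⁆) : WB n)⁆ = inl (ofAdd (ev i + ev j)) := by
    rw [sd_commutator, vec_aut_comb, vecB i j k hij hik hjk]
  have h2eq : derivedSeries (WB n) 2 =
      ⁅derivedSeries (WB n) 1, derivedSeries (WB n) 1⁆ := derivedSeries_succ _ _
  rw [← heq, h2eq]
  apply Subgroup.commutator_mem_commutator
  · exact wb_mem_ds1 j k i hjk hij hik
  · have : (inr (⁅Equiv.swap i j, Equiv.swap i k⁆) : WB n) =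
        ⁅(inr (Equiv.swap i j) : WB n), (inr (Equiv.swap i k) : WB n)⁆ :=
      map_commutatorElement (inr : Equiv.Perm (Fin n) →* WB n) _ _
    rw [this, derivedSeries_succ, derivedSeries_zero]
    exact Subgroup.commutator_mem_commutator (Subgroup.mem_top _) (Subgroup.mem_top _)

-- === semidirect derived series membership : WD ===
def vd {n : ℕ} (i j : Fin n) : ↥(Ve n) := ⟨ofAdd (ev i + ev j), pair_mem_Ve i j⟩

lemma wd_mem_ds1 {n : ℕ} (i j m : Fin n) (hij : i ≠ j) (hmi : m ≠ i) (hmj : m ≠ j) :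
    (inl (vd i j) : WD n) ∈ derivedSeries (WD n) 1 := by
  have harg : (vd i m * (permAutVe n (Equiv.swap i j)) (vd i m)⁻¹) = vd i j := by
    apply Subtype.ext
    show (ofAdd (ev i + ev m)) *
      permAut n (Equiv.swap i j) ((ofAdd (ev i + ev m))⁻¹) = ofAdd (ev i + ev j)
    rw [vec_aut_comb, vecA i j m hij hmi hmj]
  have heq : ⁅(inl (vd i m) : WD n), (inr (Equiv.swap i j) : WD n)⁆ = inl (vd i j) := by
    rw [sd_commutator, harg]
  rw [← heq, derivedSeries_succ, derivedSeries_zero]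
  exact Subgroup.commutator_mem_commutator (Subgroup.mem_top _) (Subgroup.mem_top _)

lemma wd_mem_ds2 {n : ℕ} (hn : 3 ≤ n) (i j : Fin n) (hij : i ≠ j) :
    (inl (vd i j) : WD n) ∈ derivedSeries (WD n) 2 := by
  obtain ⟨k, hk⟩ : ∃ k : Fin n, k ∉ ({i, j} : Finset (Fin n)) := by
    by_contra hcon
    push_neg at hcon
    have hsub : (Finset.univ : Finset (Fin n)) ⊆ {i, j} := fun x _ => hcon x
    have hcard := Finset.card_le_card hsub
    have h2 : ({i, j} : Finset (Fin n)).card ≤ 2 := by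
      apply le_trans (Finset.card_insert_le _ _); simp
    rw [Finset.card_univ, Fintype.card_fin] at hcard
    omega
  simp only [Finset.mem_insert, Finset.mem_singleton] at hk
  push_neg at hk
  obtain ⟨hki, hkj⟩ := hk
  have hik : i ≠ k := Ne.symm hki
  have hjk : j ≠ k := Ne.symm hkj
  have harg : (vd j k * (permAutVe n (⁅Equiv.swap i j, Equiv.swap i k⁆)) (vd j k)⁻¹)
      = vd i j := by
    apply Subtype.ext
    show (ofAdd (ev j + ev k)) *
      permAut n (⁅Equiv.swap i j, Equiv.swap i k⁆) ((ofAdd (ev j + ev k))⁻¹) =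
      ofAdd (ev i + ev j)
    rw [vec_aut_comb, vecB i j k hij hik hjk]
  have heq : ⁅(inl (vd j k) : WD n),
      (inr (⁅Equiv.swap i j, Equiv.swap i k⁆) : WD n)⁆ = inl (vd i j) := by
    rw [sd_commutator, harg]
  have h2eq : derivedSeries (WD n) 2 =
      ⁅derivedSeries (WD n) 1, derivedSeries (WD n) 1⁆ := derivedSeries_succ _ _
  rw [← heq, h2eq]
  apply Subgroup.commutator_mem_commutator
  · exact wd_mem_ds1 j k i hjk hij hik
  · have : (inr (⁅Equiv.swap i j, Equiv.swap i k⁆) : WD n) =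
        ⁅(inr (Equiv.swap i j) : WD n), (inr (Equiv.swap i k) : WD n)⁆ :=
      map_commutatorElement (inr : Equiv.Perm (Fin n) →* WD n) _ _
    rw [this, derivedSeries_succ, derivedSeries_zero]
    exact Subgroup.commutator_mem_commutator (Subgroup.mem_top _) (Subgroup.mem_top _)

-- === generation of the even subgroup by the pair vectors ===
lemma gen_mem {n : ℕ} (S : Subgroup (Vn n))
    (hgen : ∀ i j : Fin n, i ≠ j → ofAdd (ev i + ev j) ∈ S) :
    ∀ (k : ℕ) (v : Fin n → ZMod 2),
      (Finset.univ.filter fun x => v x ≠ 0).card ≤ k → (∑ x, v x) = 0 → ofAdd v ∈ S := by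
  intro k
  induction k with
  | zero =>
    intro v hcard _
    have hv : v = 0 := by
      funext x
      by_contra hx
      have hmem : x ∈ Finset.univ.filter (fun x => v x ≠ 0) := by
        simp only [Finset.mem_filter, Finset.mem_univ, true_and]; exact hx
      have := Finset.card_pos.mpr ⟨x, hmem⟩
      omega
    rw [hv, ofAdd_zero]
    exact S.one_mem
  | succ k ih =>
    intro v hcard hsum
    by_cases hv0 : v = 0
    · rw [hv0, ofAdd_zero]; exact S.one_mem
    obtain ⟨i, hi⟩ : ∃ i, v i ≠ 0 := Function.ne_iff.mp hv0
    have hvi : v i = 1 := (zmod2_cases (v i)).resolve_left hi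
    have hrest : (∑ x ∈ Finset.univ.erase i, v x) = 1 := by
      have hins := Finset.sum_erase_add Finset.univ v (Finset.mem_univ i)
      rw [hvi, hsum] at hins
      have hfin : ∀ c : ZMod 2, c + 1 = 0 → c = 1 := by decide
      exact hfin _ hins
    obtain ⟨j, hjmem, hj⟩ : ∃ j ∈ Finset.univ.erase i, v j ≠ 0 := by
      apply Finset.exists_ne_zero_of_sum_ne_zero
      rw [hrest]; exact one_ne_zero
    have hji : j ≠ i := (Finset.mem_erase.mp hjmem).1
    have hvj : v j = 1 := (zmod2_cases (v j)).resolve_left hj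
    set w : Fin n → ZMod 2 := v + ev i + ev j with hw
    have hwi : w i = 0 := by
      simp only [hw, Pi.add_apply, ev]
      rw [hvi, Pi.single_eq_same, Pi.single_eq_of_ne (Ne.symm hji)]
      decide
    have hwj : w j = 0 := by
      simp only [hw, Pi.add_apply, ev]
      rw [hvj, Pi.single_eq_same, Pi.single_eq_of_ne hji]
      decide
    have hwx : ∀ x, x ≠ i → x ≠ j → w x = v x := by
      intro x hxi hxj
      simp only [hw, Pi.add_apply, ev]
      rw [Pi.single_eq_of_ne hxi, Pi.single_eq_of_ne hxj, add_zero, add_zero]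
    have hsub : (Finset.univ.filter fun x => w x ≠ 0) ⊆
        (Finset.univ.filter fun x => v x ≠ 0).erase i := by
      intro x hx
      simp only [Finset.mem_filter, Finset.mem_univ, true_and] at hx
      have hxi : x ≠ i := fun hc => hx (hc ▸ hwi)
      have hxj : x ≠ j := fun hc => hx (hc ▸ hwj)
      rw [Finset.mem_erase]
      refine ⟨hxi, ?_⟩
      simp only [Finset.mem_filter, Finset.mem_univ, true_and]
      rw [← hwx x hxi hxj]; exact hx
    have hcard' : (Finset.univ.filter fun x => w x ≠ 0).card ≤ k := by
      have h1 := Finset.card_le_card hsub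
      have himem : i ∈ (Finset.univ.filter fun x => v x ≠ 0) := by
        simp only [Finset.mem_filter, Finset.mem_univ, true_and]; exact hi
      have h2 := Finset.card_erase_of_mem himem
      omega
    have hsum' : (∑ x, w x) = 0 := by
      simp only [hw, Pi.add_apply, Finset.sum_add_distrib, hsum, sum_single]
      decide
    have hwmem := ih w hcard' hsum'
    have hveq : v = w + (ev i + ev j) := by
      funext x
      simp only [hw, Pi.add_apply]
      have : ∀ a b c : ZMod 2, a + b + c + (b + c) = a := by decide
      rw [this]
    rw [hveq, ofAdd_add]
    exact S.mul_mem hwmem (hgen i j (Ne.symm hji))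

-- === packaging : the abelian normal subgroup inside the second derived subgroup ===
lemma wb_package (n : ℕ) (hn : 3 ≤ n) :
    ∃ A : Subgroup (WB n), A.Normal ∧ (∀ a ∈ A, ∀ b ∈ A, a * b = b * a) ∧
      A ≤ derivedSeries (WB n) 2 ∧ A ≠ ⊥ := by
  refine ⟨(Ve n).map (inl : Vn n →* WB n), ?_, ?_, ?_, ?_⟩
  · constructor
    rintro x ⟨v, hv, rfl⟩ g
    rw [sd_conj]
    exact ⟨permAut n g.right v, permAut_mem_Ve _ hv, rfl⟩
  · rintro a ⟨v, _, rfl⟩ b ⟨w, _, rfl⟩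
    rw [← map_mul, ← map_mul, mul_comm]
  · rintro x ⟨v, hv, rfl⟩
    have hS : ∀ i j : Fin n, i ≠ j →
        ofAdd (ev i + ev j) ∈ (derivedSeries (WB n) 2).comap (inl : Vn n →* WB n) := by
      intro i j hij
      exact wb_mem_ds2 hn i j hij
    have hv' : (∑ x, toAdd v x) = 0 := hv
    have := gen_mem _ hS (Finset.univ.filter fun x => toAdd v x ≠ 0).card (toAdd v)
      le_rfl hv'
    simpa using this
  · intro hc
    have h01 : (⟨0, by omega⟩ : Fin n) ≠ ⟨1, by omega⟩ := by simp [Fin.ext_iff]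
    have hmem : (inl (ofAdd (ev (⟨0, by omega⟩ : Fin n) + ev ⟨1, by omega⟩)) : WB n) ∈
        (Ve n).map (inl : Vn n →* WB n) := ⟨_, pair_mem_Ve _ _, rfl⟩
    rw [hc, Subgroup.mem_bot] at hmem
    have h1 : (ofAdd (ev (⟨0, by omega⟩ : Fin n) + ev ⟨1, by omega⟩) : Vn n) = 1 :=
      inl_injective hmem
    have h2 := congrFun (congrArg toAdd h1) ⟨0, by omega⟩
    simp only [toAdd_ofAdd, Pi.add_apply, ev] at h2
    rw [Pi.single_eq_of_ne h01] at h2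
    simp only [toAdd_one, Pi.zero_apply, add_zero] at h2
    exact one_ne_zero (α := ZMod 2) h2

lemma wd_package (n : ℕ) (hn : 3 ≤ n) :
    ∃ A : Subgroup (WD n), A.Normal ∧ (∀ a ∈ A, ∀ b ∈ A, a * b = b * a) ∧
      A ≤ derivedSeries (WD n) 2 ∧ A ≠ ⊥ := by
  refine ⟨(inl : ↥(Ve n) →* WD n).range, ?_, ?_, ?_, ?_⟩
  · constructor
    rintro x ⟨v, rfl⟩ g
    rw [sd_conj]
    exact ⟨_, rfl⟩
  · rintro a ⟨v, rfl⟩ b ⟨w, rfl⟩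
    rw [← map_mul, ← map_mul, mul_comm]
  · rintro x ⟨v, rfl⟩
    set S : Subgroup (Vn n) := Subgroup.map (Ve n).subtype
      (Subgroup.comap (inl : ↥(Ve n) →* WD n) (derivedSeries (WD n) 2)) with hSdef
    have hS : ∀ i j : Fin n, i ≠ j → ofAdd (ev i + ev j) ∈ S := by
      intro i j hij
      exact ⟨vd i j, wd_mem_ds2 hn i j hij, rfl⟩
    have hv' : (∑ x, toAdd (v : Vn n) x) = 0 := v.2
    have hmem := gen_mem _ hS (Finset.univ.filter fun x => toAdd (v : Vn n) x ≠ 0).card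
      (toAdd (v : Vn n)) le_rfl hv'
    have hmem' : (v : Vn n) ∈ S := by simpa using hmem
    obtain ⟨y, hy, hyv⟩ := hmem'
    have : y = v := Subtype.ext hyv
    rw [← this]
    exact hy
  · intro hc
    have h01 : (⟨0, by omega⟩ : Fin n) ≠ ⟨1, by omega⟩ := by simp [Fin.ext_iff]
    have hmem : (inl (vd (⟨0, by omega⟩ : Fin n) ⟨1, by omega⟩) : WD n) ∈
        (inl : ↥(Ve n) →* WD n).range := ⟨_, rfl⟩
    rw [hc, Subgroup.mem_bot] at hmem
    have h1 : (vd (⟨0, by omega⟩ : Fin n) ⟨1, by omega⟩) = 1 := inl_injective hmem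
    have h1' : (ofAdd (ev (⟨0, by omega⟩ : Fin n) + ev ⟨1, by omega⟩) : Vn n) = 1 :=
      congrArg Subtype.val h1
    have h2 := congrFun (congrArg toAdd h1') ⟨0, by omega⟩
    simp only [toAdd_ofAdd, Pi.add_apply, ev] at h2
    rw [Pi.single_eq_of_ne h01] at h2
    simp only [toAdd_one, Pi.zero_apply, add_zero] at h2
    exact one_ne_zero (α := ZMod 2) h2

end WeylPart

section AbstractPart
open Function
theorem abstract_no_surj (n : ℕ) (hn : 3 ≤ n) (hn4 : n ≠ 4)
    (r : ℕ) (G : Type*) [Group G] (Gi : Fin r → Type*) [∀ i, Group (Gi i)]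
    (ρ : ∀ i, G →* Gi i) (hsurj : ∀ i, Surjective (ρ i))
    (hker : (⨅ i, (ρ i).ker) = ⊥)
    (hiso : ∀ i, ∃ H : Subgroup (Equiv.Perm (Fin n)), H.Normal ∧ Nonempty (Gi i ≃* ↥H))
    (W : Type*) [Group W] (A : Subgroup W) (hAn : A.Normal)
    (hAab : ∀ a ∈ A, ∀ b ∈ A, a * b = b * a) (hAle : A ≤ derivedSeries W 2)
    (hAbot : A ≠ ⊥) (f : G →* W) : ¬ Surjective f := by
  intro hf
  set D : Subgroup G := derivedSeries G 2 with hD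
  have hmapD : Subgroup.map f D = derivedSeries W 2 := map_derivedSeries_eq hf 2
  set φ : ↥D →* ↥(Subgroup.map f D) := f.subgroupMap D with hφ
  have hφs : Surjective φ := f.subgroupMap_surjective D
  set N : Fin r → Subgroup ↥D := fun i => ((ρ i).ker).subgroupOf D with hN
  haveI : ∀ i, (N i).Normal := fun i => ((ρ i).normal_ker).subgroupOf D
  have hbot : (⨅ i, N i) = ⊥ := by
    have h1 : (⨅ i, N i) = (⨅ i, (ρ i).ker).subgroupOf D := by
      simp only [hN, Subgroup.subgroupOf, Subgroup.comap_iInf]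
    rw [h1, hker, Subgroup.bot_subgroupOf]
  have htosn : ∀ i, TOSN (↥D ⧸ N i) := by
    intro i
    obtain ⟨H, hHn, ⟨e⟩⟩ := hiso i
    set ψ : ↥D →* Gi i := (ρ i).comp D.subtype with hψ
    have hkerψ : ψ.ker = N i := (MonoidHom.comap_ker _ _)
    have e1 : (↥D ⧸ N i) ≃* ↥ψ.range :=
      (QuotientGroup.quotientMulEquivOfEq hkerψ).symm.trans
        (QuotientGroup.quotientKerEquivRange ψ)
    have hrange : ψ.range = derivedSeries (Gi i) 2 := by
      rw [hψ, MonoidHom.range_comp, Subgroup.range_subtype]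
      exact map_derivedSeries_eq (hsurj i) 2
    have e2 : ↥ψ.range ≃* ↥(derivedSeries (Gi i) 2) := MulEquiv.subgroupCongr hrange
    have hmap3 : Subgroup.map (e : Gi i →* ↥H) (derivedSeries (Gi i) 2) =
        derivedSeries ↥H 2 := map_derivedSeries_eq e.surjective 2
    have e3 : ↥(derivedSeries (Gi i) 2) ≃* ↥(derivedSeries ↥H 2) :=
      (e.subgroupMap (derivedSeries (Gi i) 2)).trans (MulEquiv.subgroupCongr hmap3)
    exact TOSN_congr ((e1.trans e2).trans e3).symm (perm_tosn n hn hn4 H hHn)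
  have hres := core_lemma r ↥D N hbot htosn ↥(Subgroup.map f D) φ hφs
    (A.subgroupOf (Subgroup.map f D)) (hAn.subgroupOf _)
    (fun a ha b hb => Subtype.ext (hAab a.1 ha b.1 hb))
  apply hAbot
  have hAle' : A ≤ Subgroup.map f D := by rw [hmapD]; exact hAle
  exact (Subgroup.subgroupOf_eq_bot.mp hres).eq_bot_of_le hAle'

end AbstractPart

open Function in
set_option synthInstance.maxHeartbeats 1000000 in
/-- Let `n ≥ 3`, `n ≠ 4`.  Let `K` be a field with algebraic closure `K̄`, and let
`L₁, …, L_r` be intermediate fields of `K̄/K`, each finite-dimensional and Galois over `K`,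
such that each `Gal(Lᵢ/K)` is isomorphic to a normal subgroup of `Sₙ`.  Let `L` be the
compositum of the `Lᵢ`.  Then there is no surjective group homomorphism from `Gal(L/K)`
onto `W(Bₙ) = V ⋊ Sₙ`, and none onto `W(Dₙ) = Vₑ ⋊ Sₙ`. -/
theorem no_surjection_from_Sn_compositum (n : ℕ) (hn : 3 ≤ n) (hn4 : n ≠ 4)
    (K Kbar : Type*) [Field K] [Field Kbar] [Algebra K Kbar] [IsAlgClosure K Kbar]
    (r : ℕ) (L : Fin r → IntermediateField K Kbar)
    (hfd : ∀ i, FiniteDimensional K ↥(L i)) (hgal : ∀ i, IsGalois K ↥(L i))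
    (hiso : ∀ i, ∃ H : Subgroup (Equiv.Perm (Fin n)), H.Normal ∧
      Nonempty ((↥(L i) ≃ₐ[K] ↥(L i)) ≃* ↥H)) :
    (∀ f : (↥(⨆ i, L i : IntermediateField K Kbar) ≃ₐ[K]
        ↥(⨆ i, L i : IntermediateField K Kbar)) →* WB n, ¬ Function.Surjective f) ∧
    (∀ f : (↥(⨆ i, L i : IntermediateField K Kbar) ≃ₐ[K]
        ↥(⨆ i, L i : IntermediateField K Kbar)) →* WD n, ¬ Function.Surjective f) := by
  haveI : ∀ i, IsGalois K ↥(L i) := hgal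
  haveI : ∀ i, Normal K ↥(L i) := fun i => (hgal i).to_normal
  haveI : Normal K ↥(⨆ i, L i : IntermediateField K Kbar) := IntermediateField.normal_iSup K Kbar L
  set Lsup : IntermediateField K Kbar := ⨆ i, L i with hLsup
  -- the restriction homomorphisms with their properties
  have pack : ∀ i : Fin r, ∃ ρi : (↥Lsup ≃ₐ[K] ↥Lsup) →* (↥(L i) ≃ₐ[K] ↥(L i)),
      Surjective ρi ∧ ∀ σ ∈ ρi.ker, ∀ (x : Kbar) (hx : x ∈ L i) (hx' : x ∈ Lsup),
        σ ⟨x, hx'⟩ = ⟨x, hx'⟩ := by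
    intro i
    have hle : L i ≤ Lsup := le_iSup L i
    letI : Algebra ↥(L i) ↥Lsup := (IntermediateField.inclusion hle).toRingHom.toAlgebra
    haveI : IsScalarTower K ↥(L i) ↥Lsup := IsScalarTower.of_algebraMap_eq
      (fun x => ((IntermediateField.inclusion hle).commutes x).symm)
    have halg : ∀ (x : Kbar) (hx : x ∈ L i) (hx' : x ∈ Lsup),
        algebraMap ↥(L i) ↥Lsup ⟨x, hx⟩ = ⟨x, hx'⟩ := by
      intro x hx hx'
      apply Subtype.ext
      exact IntermediateField.coe_inclusion hle ⟨x, hx⟩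
    refine ⟨AlgEquiv.restrictNormalHom (↥(L i)),
      AlgEquiv.restrictNormalHom_surjective ↥Lsup, ?_⟩
    intro σ hσ x hx hx'
    have hcomm := AlgEquiv.restrictNormal_commutes σ (↥(L i)) ⟨x, hx⟩
    have hone : σ.restrictNormal (↥(L i)) = 1 := hσ
    rw [hone] at hcomm
    rw [← halg x hx hx', ← hcomm]
    congr 1
  choose ρ hρsurj hρker using pack
  -- the kernels intersect trivially
  have hker : (⨅ i, (ρ i).ker) = ⊥ := by
    rw [eq_bot_iff]
    intro σ hσ
    rw [Subgroup.mem_iInf] at hσ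
    rw [Subgroup.mem_bot]
    set Sal : Subalgebra K Kbar :=
      { carrier := {x | ∃ hx' : x ∈ Lsup, σ ⟨x, hx'⟩ = ⟨x, hx'⟩}
        mul_mem' := by
          rintro x y ⟨hx, hfx⟩ ⟨hy, hfy⟩
          refine ⟨mul_mem hx hy, ?_⟩
          have hxy : (⟨x * y, mul_mem hx hy⟩ : ↥Lsup) = ⟨x, hx⟩ * ⟨y, hy⟩ := rfl
          rw [hxy, map_mul, hfx, hfy]
        add_mem' := by
          rintro x y ⟨hx, hfx⟩ ⟨hy, hfy⟩
          refine ⟨add_mem hx hy, ?_⟩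
          have hxy : (⟨x + y, add_mem hx hy⟩ : ↥Lsup) = ⟨x, hx⟩ + ⟨y, hy⟩ := rfl
          rw [hxy, map_add, hfx, hfy]
        algebraMap_mem' := by
          intro c
          refine ⟨Lsup.algebraMap_mem c, ?_⟩
          have hc : (⟨algebraMap K Kbar c, Lsup.algebraMap_mem c⟩ : ↥Lsup) =
              algebraMap K ↥Lsup c := rfl
          rw [hc]
          exact σ.commutes c } with hSal
    have hinv : ∀ x ∈ Sal, x⁻¹ ∈ Sal := by
      rintro x ⟨hx, hfx⟩
      refine ⟨inv_mem hx, ?_⟩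
      have hxi : (⟨x⁻¹, inv_mem hx⟩ : ↥Lsup) = (⟨x, hx⟩)⁻¹ := rfl
      rw [hxi, map_inv₀, hfx]
    have hle : Lsup ≤ Sal.toIntermediateField hinv := by
      rw [hLsup]
      apply iSup_le
      intro i x hx
      exact ⟨le_iSup L i hx, hρker i σ (hσ i) x hx (le_iSup L i hx)⟩
    apply AlgEquiv.ext
    intro x
    obtain ⟨hx', hfix⟩ := hle x.2
    have hxx : (⟨(x : Kbar), hx'⟩ : ↥Lsup) = x := Subtype.ext rfl
    rw [hxx] at hfix
    rw [hfix]
    rfl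
  constructor
  · intro f
    obtain ⟨A, hAn, hAab, hAle, hAbot⟩ := wb_package n hn
    exact abstract_no_surj n hn hn4 r _ _ ρ hρsurj hker hiso (WB n) A hAn hAab hAle hAbot f
  · intro f
    obtain ⟨A, hAn, hAab, hAle, hAbot⟩ := wd_package n hn
    exact abstract_no_surj n hn hn4 r _ _ ρ hρsurj hker hiso (WD n) A hAn hAab hAle hAbot f
end

section
/- Let U be a group admitting an injective homomorphism into a finite product ∏_{i=1}^r Uᵢ, where each Uᵢ is isomorphic to a normal subgroup of S₄ × ZMod 2 (the Weyl group of B₃). Then there is no surjective group homomorphism from U onto the Weyl group W(D₄) = Vₑ ⋊ S₄. -/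
open Multiplicative

open scoped commutatorElement

/-- The 4-variable word law `⁅⁅a,b⁆,⁅c,d⁆⁆² = 1`. -/
def LawH (G : Type*) [Group G] : Prop :=
  ∀ a b c d : G, ⁅⁅a,b⁆,⁅c,d⁆⁆ ^ 2 = 1

lemma lawH_of_injective {G K : Type*} [Group G] [Group K] (φ : K →* G)
    (hφ : Function.Injective φ) (hG : LawH G) : LawH K := by
  intro a b c d
  apply hφ
  simp only [map_pow, map_commutatorElement, map_one]
  exact hG _ _ _ _

lemma lawH_of_surjective {G K : Type*} [Group G] [Group K] (φ : G →* K)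
    (hφ : Function.Surjective φ) (hG : LawH G) : LawH K := by
  intro a b c d
  obtain ⟨a', rfl⟩ := hφ a
  obtain ⟨b', rfl⟩ := hφ b
  obtain ⟨c', rfl⟩ := hφ c
  obtain ⟨d', rfl⟩ := hφ d
  rw [← map_commutatorElement, ← map_commutatorElement, ← map_commutatorElement,
    ← map_pow, hG, map_one]

lemma lawH_pi {ι : Type*} (Ui : ι → Type*) [∀ i, Group (Ui i)]
    (h : ∀ i, LawH (Ui i)) : LawH (∀ i, Ui i) := by
  intro a b c d
  funext i
  simpa [commutatorElement_def, pow_two] using h i (a i) (b i) (c i) (d i)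

lemma lawH_comm {G : Type*} [CommGroup G] : LawH G := by
  intro a b c d
  have h : ∀ x y : G, ⁅x,y⁆ = 1 := fun x y =>
    commutatorElement_eq_one_iff_commute.mpr (mul_comm x y)
  rw [h, one_pow]

set_option maxRecDepth 100000 in
lemma perm4_key : ∀ a b : Equiv.Perm (Fin 4),
    Equiv.Perm.sign a = 1 → Equiv.Perm.sign b = 1 → ⁅a,b⁆ ^ 2 = 1 := by decide

lemma lawH_S4 : LawH (Equiv.Perm (Fin 4)) := by
  intro a b c d
  apply perm4_key
  · rw [map_commutatorElement]
    exact commutatorElement_eq_one_iff_commute.mpr (mul_comm _ _)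
  · rw [map_commutatorElement]
    exact commutatorElement_eq_one_iff_commute.mpr (mul_comm _ _)

lemma lawH_prod {G K : Type*} [Group G] [Group K] (hG : LawH G) (hK : LawH K) :
    LawH (G × K) := by
  intro a b c d
  have h1 := hG a.1 b.1 c.1 d.1
  have h2 := hK a.2 b.2 c.2 d.2
  simp only [commutatorElement_def, pow_two] at h1 h2 ⊢
  exact Prod.ext h1 h2

lemma lawH_S4Z2 : LawH (Equiv.Perm (Fin 4) × Multiplicative (ZMod 2)) :=
  lawH_prod lawH_S4 lawH_comm

lemma mem_Ve_witness : ofAdd ![(0:ZMod 2),0,1,1] ∈ Ve 4 := by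
  show ∑ i, toAdd (ofAdd ![(0:ZMod 2),0,1,1]) i = 0
  decide

set_option maxRecDepth 400000 in
/-- Let `U` be a group admitting an injective homomorphism into a finite product
`∏_{i=1}^r Uᵢ`, where each `Uᵢ` is isomorphic to a normal subgroup of `S₄ × ℤ/2ℤ`
(the Weyl group of `B₃`).  Then there is no surjective group homomorphism from `U`
onto the Weyl group `W(D₄) = Vₑ ⋊ S₄`. -/
theorem no_surjection_onto_WD4 (r : ℕ) (Ui : Fin r → Type*) [∀ i, Group (Ui i)]
    (hUi : ∀ i, ∃ H : Subgroup (Equiv.Perm (Fin 4) × Multiplicative (ZMod 2)),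
      H.Normal ∧ Nonempty (Ui i ≃* ↥H))
    (U : Type*) [Group U] (f : U →* ∀ i, Ui i) (hf : Function.Injective f)
    (g : U →* WD 4) : ¬ Function.Surjective g := by
  intro hg
  -- the law holds in every `Ui i`
  have hlawUi : ∀ i, LawH (Ui i) := by
    intro i
    obtain ⟨H, -, ⟨e⟩⟩ := hUi i
    exact lawH_of_injective (H.subtype.comp e.toMonoidHom)
      (H.subtype_injective.comp e.injective) lawH_S4Z2
  have hlawU : LawH U := lawH_of_injective f hf (lawH_pi Ui hlawUi)
  have hlawWD : LawH (WD 4) := lawH_of_surjective g hg hlawU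
  have hw := hlawWD ⟨1, Equiv.swap 2 3⟩ ⟨1, Equiv.swap 1 2⟩
    ⟨1, Equiv.swap 1 2 * Equiv.swap 2 3⟩
    ⟨⟨ofAdd ![0,0,1,1], mem_Ve_witness⟩, Equiv.swap 0 1 * Equiv.swap 0 2⟩
  exact absurd (congrArg SemidirectProduct.left hw) (by decide)
end
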